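/- arXiv:1811.08363 — 4 statements merged into one kernel-verified Lean document; each statement's English description precedes it below -/
import Mathlib

section
/- Let G be a bridgeless cubic graph and let M1, M2 be perfect matchings of G such that M1 ∩ M2 contains no odd cut of G. Then the complement of M1 ∪ M2 is bipartite (contains no odd cycle). -/
open SimpleGraph

/-- A graph is cubic if every vertex has exactly 3 neighbours. -/
def IsCubic {V : Type*} (G : SimpleGraph V) : Prop :=
  ∀ v : V, (G.neighborSet v).ncard = 3

/-- A graph is bridgeless if no edge is a bridge. -/
def Bridgeless {V : Type*} (G : SimpleGraph V) : Prop :=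
  ∀ e : Sym2 V, ¬ G.IsBridge e

/-- The edge boundary `∂W`: edges of `G` with exactly one endpoint in `W`. -/
def edgeBoundary {V : Type*} (G : SimpleGraph V) (W : Set V) : Set (Sym2 V) :=
  {e | e ∈ G.edgeSet ∧ ∃ u v : V, e = s(u, v) ∧ u ∈ W ∧ v ∉ W}

section Aux

variable {V : Type*}

private lemma walk_length_rotate {G : SimpleGraph V} [DecidableEq V] {u v : V}
    (c : G.Walk v v) (h : u ∈ c.support) : (c.rotate u h).length = c.length := by
  rw [Walk.rotate, Walk.length_append, Nat.add_comm, ← Walk.length_append, Walk.take_spec]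

private lemma walk_support_getElem? {G : SimpleGraph V} :
    ∀ {u v : V} (p : G.Walk u v) (i : ℕ), i ≤ p.length → p.support[i]? = some (p.getVert i) := by
  intro u v p
  induction p with
  | nil =>
    intro i hi
    have : i = 0 := Nat.le_zero.mp hi
    subst this; simp [Walk.getVert]
  | cons h q ih =>
    intro i hi
    cases i with
    | zero => simp [Walk.getVert]
    | succ n =>
      rw [Walk.support_cons]
      simpa [Walk.getVert_cons_succ] using ih n (by simpa [Walk.length_cons] using hi)

/-- From an odd closed walk whose support-tail has a duplicate, one can extract a strictly
shorter odd closed walk. -/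
private lemma exists_shorter {G : SimpleGraph V} [DecidableEq V] {u : V} (p : G.Walk u u)
    (hodd : Odd p.length) (hdup : ¬ p.support.tail.Nodup) :
    ∃ (x : V) (q : G.Walk x x), Odd q.length ∧ q.length < p.length := by
  obtain ⟨x, hx⟩ := List.exists_duplicate_iff_not_nodup.2 hdup
  have hcount : 2 ≤ p.support.tail.count x := List.duplicate_iff_two_le_count.1 hx
  have hxs : x ∈ p.support := List.mem_of_mem_tail hx.mem
  set r := p.rotate x hxs with hr
  have hrl : r.length = p.length := walk_length_rotate p hxs
  have hrcount : 2 ≤ r.support.tail.count x := by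
    rwa [List.Perm.count_eq (p.support_rotate x hxs).perm]
  have hrnil : ¬ r.Nil := by
    rw [Walk.not_nil_iff_lt_length, hrl]
    exact hodd.pos
  obtain ⟨y, hadj, s, hs⟩ := Walk.not_nil_iff.mp hrnil
  have htail : r.support.tail = s.support := by rw [hs]; simp
  have hxss : x ∈ s.support := by
    rw [← htail]
    exact List.count_pos_iff.mp (by omega)
  have hspec : (s.takeUntil x hxss).append (s.dropUntil x hxss) = s := s.take_spec hxss
  set s1 := s.takeUntil x hxss with hs1
  set s2 := s.dropUntil x hxss with hs2
  have hlen : s1.length + s2.length = s.length := by rw [← Walk.length_append, hspec]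
  have hc1 : s1.support.count x = 1 := s.count_support_takeUntil_eq_one hxss
  have hsupp : s.support = s1.support ++ s2.support.tail := by
    rw [← hspec, Walk.support_append]
  have hs2mem : x ∈ s2.support.tail := by
    have h2 : 2 ≤ s.support.count x := by rw [← htail]; exact hrcount
    rw [hsupp, List.count_append] at h2
    exact List.count_pos_iff.mp (by omega)
  have hs2len : 0 < s2.length := by
    have h1 : s2.support.tail ≠ [] := List.ne_nil_of_mem hs2mem
    have h2 : s2.support.length = s2.length + 1 := Walk.length_support s2
    have := List.length_pos_iff.mpr h1
    rw [List.length_tail, h2] at this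
    omega
  have hplen : (1 + s1.length) + s2.length = p.length := by
    have : r.length = s.length + 1 := by rw [hs]; simp
    omega
  rcases Nat.even_or_odd s2.length with h2 | h2
  · refine ⟨x, Walk.cons hadj s1, ?_, ?_⟩
    · rw [Walk.length_cons]
      rcases hodd with ⟨k, hk⟩
      rcases h2 with ⟨m, hm⟩
      exact ⟨k - m, by omega⟩
    · rw [Walk.length_cons]; omega
  · exact ⟨x, s2, h2, by omega⟩

/-- In a closed walk of length at least 3 with no repetition in the tail of its support,
every vertex of the support tail has two distinct neighbours along the walk, both in the
support tail. -/
private lemma two_walk_neighbors {G : SimpleGraph V} [DecidableEq V] {u : V} (q : G.Walk u u)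
    (hnodup : q.support.tail.Nodup) (hn3 : 3 ≤ q.length)
    {v : V} (hv : v ∈ q.support.tail) :
    ∃ a b : V, a ≠ b ∧ a ∈ q.support.tail ∧ b ∈ q.support.tail ∧ G.Adj v a ∧ G.Adj v b := by
  have hvs : v ∈ q.support := List.mem_of_mem_tail hv
  set r := q.rotate v hvs with hr
  have hrl : r.length = q.length := walk_length_rotate q hvs
  have hrot : r.support.tail ~r q.support.tail := q.support_rotate v hvs
  have hrnodup : r.support.tail.Nodup := hrot.nodup_iff.mpr hnodup
  set a := r.getVert 1 with ha
  set b := r.getVert (q.length - 1) with hb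
  have hadj_a : G.Adj v a := by
    have := r.adj_getVert_succ (i := 0) (by omega)
    simpa [Walk.getVert_zero] using this
  have hadj_b : G.Adj v b := by
    have h1 := r.adj_getVert_succ (i := q.length - 1) (by omega)
    have h2 : q.length - 1 + 1 = r.length := by omega
    rw [h2, Walk.getVert_length] at h1
    exact h1.symm
  have hga : r.support.tail[0]? = some a := by
    rw [List.getElem?_tail]
    exact walk_support_getElem? r 1 (by omega)
  have hgb : r.support.tail[q.length - 2]? = some b := by
    rw [List.getElem?_tail]
    have : q.length - 2 + 1 = q.length - 1 := by omega
    rw [this]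
    exact walk_support_getElem? r (q.length - 1) (by omega)
  have hab : a ≠ b := by
    intro h
    have h0 : r.support.tail.length = q.length := by
      have := Walk.length_support r
      rw [List.length_tail, this]; omega
    have := (List.getElem?_inj (l := r.support.tail) (i := 0) (j := q.length - 2)
      (by omega) hrnodup).mp (by rw [hga, hgb, h])
    omega
  exact ⟨a, b, hab, hrot.perm.mem_iff.mp (List.mem_of_getElem? hga),
    hrot.perm.mem_iff.mp (List.mem_of_getElem? hgb), hadj_a, hadj_b⟩

/-- A graph with no odd closed walk is 2-colorable. -/
private lemma colorable_of_no_odd_closed_walk {H : SimpleGraph V}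
    (hno : ∀ (x : V) (p : H.Walk x x), ¬ Odd p.length) : H.Colorable 2 := by
  classical
  have hreach : ∀ v : V, ∃ p : H.Walk (H.connectedComponentMk v).out v, True := by
    intro v
    have h : H.connectedComponentMk (H.connectedComponentMk v).out = H.connectedComponentMk v :=
      (H.connectedComponentMk v).out_eq
    exact (ConnectedComponent.eq.mp h).elim fun p => ⟨p, trivial⟩
  have C : H.Coloring Bool := by
    refine Coloring.mk (fun v => decide (Odd (hreach v).choose.length)) ?_
    intro x y hxy hcol
    have hcomp : H.connectedComponentMk x = H.connectedComponentMk y :=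
      ConnectedComponent.eq.mpr hxy.reachable
    have hout : (H.connectedComponentMk y).out = (H.connectedComponentMk x).out := by rw [hcomp]
    set p := (hreach x).choose with hp
    set q := (hreach y).choose with hq
    have hpar : (Odd p.length ↔ Odd q.length) := by
      constructor <;> intro h
      · have := hcol; simp only [decide_eq_decide] at this; exact this.mp h
      · have := hcol; simp only [decide_eq_decide] at this; exact this.mpr h
    set q' : H.Walk (H.connectedComponentMk x).out y := q.copy hout rfl with hq'
    have hq'l : q'.length = q.length := Walk.length_copy q hout rfl
    set w : H.Walk (H.connectedComponentMk x).out (H.connectedComponentMk x).out :=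
      p.append (Walk.cons hxy q'.reverse) with hw
    refine hno _ w ?_
    rw [hw, Walk.length_append, Walk.length_cons, Walk.length_reverse, hq'l]
    rcases Nat.even_or_odd p.length with he | ho
    · have : Even q.length := by
        rw [← Nat.not_odd_iff_even] at he ⊢; exact fun h => he (hpar.mpr h)
      rcases he with ⟨a, ha⟩; rcases this with ⟨b, hb⟩
      exact ⟨a + b, by omega⟩
    · have hoq := hpar.mp ho
      rcases ho with ⟨a, ha⟩; rcases hoq with ⟨b, hb⟩
      exact ⟨a + b + 1, by omega⟩
  have := C.colorable
  rwa [Fintype.card_bool] at this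

/-- The key local observation. -/
private lemma claimB [Fintype V] {G : SimpleGraph V}
    (hcubic : IsCubic G) {M1 M2 : G.Subgraph}
    (h1 : M1.IsPerfectMatching) (h2 : M2.IsPerfectMatching)
    {v a b y : V} (hab : a ≠ b)
    (hadja : (G.deleteEdges (M1.edgeSet ∪ M2.edgeSet)).Adj v a)
    (hadjb : (G.deleteEdges (M1.edgeSet ∪ M2.edgeSet)).Adj v b)
    (hGy : G.Adj v y) (hya : y ≠ a) (hyb : y ≠ b) :
    s(v, y) ∈ M1.edgeSet ∧ s(v, y) ∈ M2.edgeSet := by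
  rw [SimpleGraph.deleteEdges_adj] at hadja hadjb
  have hsub : ({a, b, y} : Set V) ⊆ G.neighborSet v := by
    rintro z (rfl | rfl | rfl)
    · exact hadja.1
    · exact hadjb.1
    · exact hGy
  have hcard : ({a, b, y} : Set V).ncard = 3 :=
    Set.ncard_eq_three.mpr ⟨a, b, y, hab, fun h => hya h.symm, fun h => hyb h.symm, rfl⟩
  have heq : ({a, b, y} : Set V) = G.neighborSet v :=
    Set.eq_of_subset_of_ncard_le hsub (by rw [hcubic v, hcard]) (Set.toFinite _)
  have key : ∀ (M : G.Subgraph), M.IsPerfectMatching →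
      (s(v, a) ∉ M.edgeSet) → (s(v, b) ∉ M.edgeSet) → s(v, y) ∈ M.edgeSet := by
    intro M hM hna hnb
    obtain ⟨w, hw, -⟩ := hM.1 (hM.2 v)
    have hwmem : w ∈ ({a, b, y} : Set V) := heq ▸ hw.adj_sub
    rcases hwmem with rfl | rfl | rfl
    · exact absurd (SimpleGraph.Subgraph.mem_edgeSet.mpr hw) hna
    · exact absurd (SimpleGraph.Subgraph.mem_edgeSet.mpr hw) hnb
    · exact SimpleGraph.Subgraph.mem_edgeSet.mpr hw
  have hna1 : s(v, a) ∉ M1.edgeSet := fun h => hadja.2 (Set.mem_union_left _ h)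
  have hna2 : s(v, a) ∉ M2.edgeSet := fun h => hadja.2 (Set.mem_union_right _ h)
  have hnb1 : s(v, b) ∉ M1.edgeSet := fun h => hadjb.2 (Set.mem_union_left _ h)
  have hnb2 : s(v, b) ∉ M2.edgeSet := fun h => hadjb.2 (Set.mem_union_right _ h)
  exact ⟨key M1 h1 hna1 hnb1, key M2 h2 hna2 hnb2⟩

end Aux

/-- If two perfect matchings of a bridgeless cubic graph have no odd cut in their
intersection, then the complement of their union is bipartite. -/
theorem stmt_5 {V : Type*} [Fintype V] (G : SimpleGraph V)
    (hcubic : IsCubic G) (hbridgeless : Bridgeless G)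
    (M1 M2 : G.Subgraph)
    (h1 : M1.IsPerfectMatching) (h2 : M2.IsPerfectMatching)
    (hNoOddCut : ∀ W : Finset V, Odd W.card →
      ¬ (edgeBoundary G (W : Set V) ⊆ M1.edgeSet ∩ M2.edgeSet)) :
    (G.deleteEdges (M1.edgeSet ∪ M2.edgeSet)).Colorable 2 := by
  classical
  set H := G.deleteEdges (M1.edgeSet ∪ M2.edgeSet) with hH
  apply colorable_of_no_odd_closed_walk
  intro x p hodd
  -- choose a minimal odd closed walk
  have hS : ∃ n, ∃ (u : V) (q : H.Walk u u), Odd q.length ∧ q.length = n :=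
    ⟨p.length, x, p, hodd, rfl⟩
  obtain ⟨u, q, hq, hqn⟩ := Nat.find_spec hS
  have hmin : ∀ m, m < Nat.find hS →
      ¬ ∃ (u : V) (q : H.Walk u u), Odd q.length ∧ q.length = m :=
    fun m hm => Nat.find_min hS hm
  -- minimality forces an actual cycle
  have hnodup : q.support.tail.Nodup := by
    by_contra hdup
    obtain ⟨y, r, hr1, hr2⟩ := exists_shorter q hq hdup
    exact hmin r.length (by omega) ⟨y, r, hr1, rfl⟩
  have hn1 : q.length ≠ 1 := by
    intro h
    have h0 := q.adj_getVert_succ (i := 0) (by omega)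
    rw [Walk.getVert_zero, show (0 : ℕ) + 1 = q.length from by omega,
      Walk.getVert_length] at h0
    exact H.irrefl h0
  have hn3 : 3 ≤ q.length := by
    rcases hq with ⟨k, hk⟩
    omega
  -- the vertex set of the cycle
  set W : Finset V := q.support.tail.toFinset with hW
  have hcardW : W.card = q.length := by
    rw [hW, List.toFinset_card_of_nodup hnodup, List.length_tail, Walk.length_support]
    omega
  refine hNoOddCut W (by rw [hcardW]; exact hq) ?_
  rintro e ⟨he, u', v', rfl, hu', hv'⟩
  have hGadj : G.Adj u' v' := by rwa [← SimpleGraph.mem_edgeSet]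
  have hu'W : u' ∈ q.support.tail := by
    rw [Finset.mem_coe, hW, List.mem_toFinset] at hu'
    exact hu'
  obtain ⟨a, b, hab, haW, hbW, hadja, hadjb⟩ := two_walk_neighbors q hnodup hn3 hu'W
  have hv'a : v' ≠ a := by
    rintro rfl
    exact hv' (by rw [Finset.mem_coe, hW, List.mem_toFinset]; exact haW)
  have hv'b : v' ≠ b := by
    rintro rfl
    exact hv' (by rw [Finset.mem_coe, hW, List.mem_toFinset]; exact hbW)
  exact claimB hcubic h1 h2 hab hadja hadjb hGadj hv'a hv'b
end

section
/- Let G be a bridgeless cubic graph. Then G admits an S4-colouring if and only if G has two perfect matchings M1, M2 such that the complement of M1 ∪ M2 is bipartite. -/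
open SimpleGraph

/-- The stars of the three vertices of the multigraph `S₄`, whose five edges are
labelled `g0, g1, g2, g3, g4` (identified with `0, 1, 2, 3, 4 : Fin 5`):
the star of `x` is `{g1, g3, g4}`, the star of `y` is `{g2, g3, g4}` and the star
of `z` is `{g0, g1, g2}`. -/
def S4Star : Fin 3 → Set (Fin 5) :=
  ![{1, 3, 4}, {2, 3, 4}, {0, 1, 2}]

/-- An `S₄`-colouring of `G`: a proper edge-colouring of `G` by the five edges of the
multigraph `S₄` such that the colours of the edges at each vertex of `G` all lie in the
star of a single vertex of `S₄`. -/
def HasS4Coloring {V : Type*} (G : SimpleGraph V) : Prop :=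
  ∃ f : Sym2 V → Fin 5,
    (∀ e₁ ∈ G.edgeSet, ∀ e₂ ∈ G.edgeSet, e₁ ≠ e₂ → (∃ x : V, x ∈ e₁ ∧ x ∈ e₂) →
      f e₁ ≠ f e₂) ∧
    (∀ u : V, ∃ i : Fin 3, ∀ e ∈ G.edgeSet, u ∈ e → f e ∈ S4Star i)

section Aux
variable {V : Type*}

def ProperEC (K : SimpleGraph V) (g : Sym2 V → Bool) : Prop :=
  ∀ e₁ ∈ K.edgeSet, ∀ e₂ ∈ K.edgeSet, e₁ ≠ e₂ → (∃ x : V, x ∈ e₁ ∧ x ∈ e₂) → g e₁ ≠ g e₂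

def ProperVC (K : SimpleGraph V) (c : V → Bool) : Prop :=
  ∀ ⦃x y : V⦄, K.Adj x y → c x ≠ c y

lemma properEC_mono {K K' : SimpleGraph V} (h : K' ≤ K) {g} (hg : ProperEC K g) :
    ProperEC K' g := fun e₁ h₁ e₂ h₂ hne hsh =>
  hg e₁ (SimpleGraph.edgeSet_mono h h₁) e₂ (SimpleGraph.edgeSet_mono h h₂) hne hsh

lemma properVC_mono {K K' : SimpleGraph V} (h : K' ≤ K) {c} (hc : ProperVC K c) :
    ProperVC K' c := fun _ _ hxy => hc (h hxy)

lemma edge_eq {K : SimpleGraph V} {e : Sym2 V} {a : V} (he : e ∈ K.edgeSet) (ha : a ∈ e) :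
    ∃ x, e = s(a, x) ∧ K.Adj a x := by
  induction e with
  | _ x y =>
    rw [Sym2.mem_iff] at ha
    rcases ha with rfl | rfl
    · exact ⟨y, rfl, he⟩
    · exact ⟨x, Sym2.eq_swap, he.symm⟩

lemma walk_parity {K : SimpleGraph V} {c : V → Bool} (hc : ProperVC K c) {u v : V}
    (p : K.Walk u v) : (c u = c v ↔ Even p.length) := by
  induction p with
  | nil => simp
  | cons h q ih =>
    rename_i x y z
    rw [SimpleGraph.Walk.length_cons, Nat.even_add_one, ← ih]
    have := hc h
    revert this
    cases hx : c x <;> cases hy : c y <;> cases hz : c z <;> simp_all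

lemma head?_mem {K : SimpleGraph V} {u v : V} (p : K.Walk u v) {e : Sym2 V}
    (h : p.edges.head? = some e) : u ∈ e := by
  cases p with
  | nil => simp at h
  | cons h' q =>
    simp only [SimpleGraph.Walk.edges_cons, List.head?_cons, Option.some.injEq] at h
    subst h; exact Sym2.mem_mk_left _ _

lemma getLast?_mem {K : SimpleGraph V} {u v : V} (p : K.Walk u v) {e : Sym2 V}
    (h : p.edges.getLast? = some e) : v ∈ e := by
  induction p with
  | nil => simp at h
  | cons h' q ih =>
    cases q with
    | nil =>
      simp only [SimpleGraph.Walk.edges_cons, SimpleGraph.Walk.edges_nil,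
        List.getLast?_singleton, Option.some.injEq] at h
      subst h; exact Sym2.mem_mk_right _ _
    | cons h'' r =>
      rw [SimpleGraph.Walk.edges_cons, SimpleGraph.Walk.edges_cons,
        List.getLast?_cons_cons] at h
      exact ih (by rw [SimpleGraph.Walk.edges_cons]; exact h)

lemma alt_walk {K : SimpleGraph V} {g : Sym2 V → Bool} (hg : ProperEC K g) {u v : V}
    (p : K.Walk u v) (hp : p.IsPath) {e₁ e₂ : Sym2 V}
    (h₁ : p.edges.head? = some e₁) (h₂ : p.edges.getLast? = some e₂) :
    (g e₁ = g e₂ ↔ Odd p.length) := by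
  induction p generalizing e₁ with
  | nil => simp at h₁
  | @cons x y z h q ih =>
    cases q with
    | nil =>
      simp only [Walk.edges_cons, Walk.edges_nil, List.head?_cons, List.getLast?_singleton,
        Option.some.injEq] at h₁ h₂
      subst h₁; subst h₂
      simp
    | @cons _ w _ h'' r =>
      rw [Walk.edges_cons, List.head?_cons, Option.some.injEq] at h₁
      subst h₁
      have h₂' : (Walk.cons h'' r).edges.getLast? = some e₂ := by
        rw [Walk.edges_cons, Walk.edges_cons, List.getLast?_cons_cons] at h₂
        rw [Walk.edges_cons]; exact h₂
      have hq' : (Walk.cons h'' r).IsPath := hp.of_cons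
      have ihq := ih hq' (e₁ := s(y, w)) (by simp) h₂'
      have hne : s(x, y) ≠ s(y, w) := by
        intro hxy
        rw [Sym2.eq_iff] at hxy
        rcases hxy with ⟨rfl, rfl⟩ | ⟨rfl, -⟩
        · exact h.ne rfl
        · have hx : x ∈ (Walk.cons h'' r).support := by
            rw [Walk.support_cons]
            exact List.mem_cons_of_mem _ r.start_mem_support
          exact ((Walk.cons_isPath_iff h _).mp hp).2 hx
      have hflip : g s(x, y) ≠ g s(y, w) :=
        hg _ (K.mem_edgeSet.mpr h) _ (K.mem_edgeSet.mpr h'') hne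
          ⟨y, Sym2.mem_mk_right _ _, Sym2.mem_mk_left _ _⟩
      rw [Walk.length_cons, Nat.odd_add_one, ← ihq]
      revert hflip
      cases g s(x,y) <;> cases g s(y,w) <;> cases g e₂ <;> simp_all

/-- From a nonnil path extract its first and last edges with membership facts. -/
lemma path_ends {K : SimpleGraph V} {a b : V} (hab : a ≠ b) (hr : K.Reachable a b) :
    ∃ (p : K.Walk a b) (e₁ e₂ : Sym2 V), p.IsPath ∧
      p.edges.head? = some e₁ ∧ p.edges.getLast? = some e₂ := by
  classical
  obtain ⟨w⟩ := hr
  have hp := w.bypass_isPath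
  have hnil : w.bypass.edges ≠ [] := by
    intro h
    have hlen := congrArg List.length h
    rw [Walk.length_edges, List.length_nil] at hlen
    exact (Walk.not_nil_of_ne hab) (Walk.nil_iff_length_eq.mpr hlen)
  exact ⟨w.bypass, w.bypass.edges.head hnil, w.bypass.edges.getLast hnil, hp,
    List.head?_eq_head hnil, List.getLast?_eq_getLast hnil⟩

lemma lemA [Fintype V] (K : SimpleGraph V) (g : Sym2 V → Bool) (hg : ProperEC K g) :
    ∃ c : V → Bool, ProperVC K c := by
  classical
  generalize hn : K.edgeSet.ncard = n
  induction n using Nat.strong_induction_on generalizing K with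
  | _ n ih =>
  rcases eq_or_ne n 0 with rfl | h0
  · refine ⟨fun _ => false, fun x y hxy => ?_⟩
    have : s(x, y) ∈ K.edgeSet := K.mem_edgeSet.mpr hxy
    rw [Set.ncard_eq_zero (Set.toFinite _)] at hn
    simp [hn] at this
  · have hne : K.edgeSet.Nonempty := by
      rw [Set.nonempty_iff_ne_empty]
      intro h; rw [h, Set.ncard_empty] at hn; exact h0 hn.symm
    obtain ⟨e, he⟩ := hne
    obtain ⟨a, b, rfl⟩ : ∃ a b, e = s(a, b) := Sym2.ind (fun a b => ⟨a, b, rfl⟩) e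
    have hab : K.Adj a b := K.mem_edgeSet.mp he
    set K' := K.deleteEdges {s(a, b)} with hK'
    have hle : K' ≤ K := K.deleteEdges_le _
    have hKe : K'.edgeSet = K.edgeSet \ {s(a, b)} := K.edgeSet_deleteEdges _
    have hcard : K'.edgeSet.ncard < n := by
      rw [hKe, ← hn]
      have := Set.ncard_diff_singleton_lt_of_mem he (Set.toFinite _)
      exact this
    obtain ⟨c', hc'⟩ := ih _ hcard K' (properEC_mono hle hg) rfl
    -- extension principle
    have hext : ∀ c : V → Bool, ProperVC K' c → c a ≠ c b → ∃ c'' : V → Bool, ProperVC K c'' := by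
      intro c hc hne'
      refine ⟨c, fun x y hxy => ?_⟩
      by_cases hxy' : s(x, y) = s(a, b)
      · rw [Sym2.eq_iff] at hxy'
        rcases hxy' with ⟨rfl, rfl⟩ | ⟨rfl, rfl⟩
        · exact hne'
        · exact hne'.symm
      · exact hc (by rw [hK', SimpleGraph.deleteEdges_adj]; exact ⟨hxy, by simpa using hxy'⟩)
    by_cases hcc : c' a = c' b
    · by_cases hreach : K'.Reachable a b
      · exfalso
        obtain ⟨p, e₁, e₂, hp, h₁, h₂⟩ := path_ends hab.ne hreach
        have he₁ : e₁ ∈ K'.edgeSet := p.edges_subset_edgeSet (List.mem_of_mem_head? h₁)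
        have he₂ : e₂ ∈ K'.edgeSet := p.edges_subset_edgeSet (List.mem_of_mem_getLast? h₂)
        have hne₁ : e₁ ≠ s(a, b) := by rw [hKe] at he₁; exact he₁.2
        have hne₂ : e₂ ≠ s(a, b) := by rw [hKe] at he₂; exact he₂.2
        have hga : g e₁ ≠ g s(a, b) :=
          hg _ (SimpleGraph.edgeSet_mono hle he₁) _ he hne₁
            ⟨a, head?_mem p h₁, Sym2.mem_mk_left _ _⟩
        have hgb : g e₂ ≠ g s(a, b) :=
          hg _ (SimpleGraph.edgeSet_mono hle he₂) _ he hne₂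
            ⟨b, getLast?_mem p h₂, Sym2.mem_mk_right _ _⟩
        have h12 : g e₁ = g e₂ := by
          revert hga hgb; cases g e₁ <;> cases g e₂ <;> cases g s(a,b) <;> simp
        have hodd : Odd p.length := (alt_walk (properEC_mono hle hg) p hp h₁ h₂).mp h12
        have heven : Even p.length := (walk_parity hc' p).mp hcc
        exact (Nat.not_odd_iff_even.mpr heven) hodd
      · set c'' : V → Bool := fun x =>
          if K'.connectedComponentMk x = K'.connectedComponentMk a then !(c' x) else c' x
          with hc''def
        have hsame : ∀ ⦃x y : V⦄, K'.Adj x y →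
            K'.connectedComponentMk x = K'.connectedComponentMk y :=
          fun x y hxy => ConnectedComponent.sound hxy.reachable
        have hc'' : ProperVC K' c'' := by
          intro x y hxy
          have h1 := hc' hxy
          rw [hc''def]
          simp only
          rw [hsame hxy]
          by_cases hcx : K'.connectedComponentMk y = K'.connectedComponentMk a <;>
            simp [hcx] <;> revert h1 <;> cases c' x <;> cases c' y <;> simp
        have hca : c'' a = !(c' a) := if_pos rfl
        have hcb : c'' b = c' b := by
          have hmk : K'.connectedComponentMk b ≠ K'.connectedComponentMk a := by
            intro h; exact hreach ((ConnectedComponent.exact h).symm)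
          exact if_neg hmk
        exact hext c'' hc'' (by rw [hca, hcb, ← hcc]; cases c' a <;> simp)
    · exact hext c' hc' hcc

lemma lemB [Fintype V] (K : SimpleGraph V) (hdeg : ∀ v : V, (K.neighborSet v).ncard ≤ 2)
    (c : V → Bool) (hc : ProperVC K c) : ∃ g : Sym2 V → Bool, ProperEC K g := by
  classical
  generalize hn : K.edgeSet.ncard = n
  induction n using Nat.strong_induction_on generalizing K with
  | _ n ih =>
  rcases eq_or_ne n 0 with rfl | h0
  · refine ⟨fun _ => false, fun e₁ he₁ e₂ he₂ _ _ => ?_⟩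
    rw [Set.ncard_eq_zero (Set.toFinite _)] at hn
    simp [hn] at he₁
  · have hne : K.edgeSet.Nonempty := by
      rw [Set.nonempty_iff_ne_empty]
      intro h; rw [h, Set.ncard_empty] at hn; exact h0 hn.symm
    obtain ⟨e, he⟩ := hne
    obtain ⟨a, b, rfl⟩ : ∃ a b, e = s(a, b) := Sym2.ind (fun a b => ⟨a, b, rfl⟩) e
    have hab : K.Adj a b := K.mem_edgeSet.mp he
    set K' := K.deleteEdges {s(a, b)} with hK'
    have hle : K' ≤ K := K.deleteEdges_le _
    have hKe : K'.edgeSet = K.edgeSet \ {s(a, b)} := K.edgeSet_deleteEdges _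
    have hcard : K'.edgeSet.ncard < n := by
      rw [hKe, ← hn]
      exact Set.ncard_diff_singleton_lt_of_mem he (Set.toFinite _)
    have hdeg' : ∀ v : V, (K'.neighborSet v).ncard ≤ 2 := fun v =>
      le_trans (Set.ncard_le_ncard (fun x hx => hle hx) (Set.toFinite _)) (hdeg v)
    obtain ⟨g', hg'⟩ := ih _ hcard K' hdeg' (properVC_mono hle hc) rfl
    -- uniqueness of K'-neighbours of a and b
    have huniq : ∀ v w : V, K.Adj v w → s(v, w) = s(a, b) →
        ∀ y y' : V, K'.Adj v y → K'.Adj v y' → y = y' := by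
      intro v w hvw hvw' y y' hy hy'
      by_contra hne'
      have hsub : ({w} ∪ {y, y'} : Set V) ⊆ K.neighborSet v := by
        intro z hz
        rcases hz with hz | hz
        · rw [Set.mem_singleton_iff] at hz; subst hz; exact hvw
        · rcases hz with rfl | hz
          · exact hle hy
          · rw [Set.mem_singleton_iff] at hz; subst hz; exact hle hy'
      have hwy : w ≠ y := by
        rintro rfl
        rw [hK', SimpleGraph.deleteEdges_adj] at hy
        exact hy.2 (Set.mem_singleton_iff.mpr hvw')
      have hwy' : w ≠ y' := by
        rintro rfl
        rw [hK', SimpleGraph.deleteEdges_adj] at hy'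
        exact hy'.2 (Set.mem_singleton_iff.mpr hvw')
      have hwmem : w ∉ ({y, y'} : Set V) := by
        simp only [Set.mem_insert_iff, Set.mem_singleton_iff]
        push_neg
        exact ⟨hwy, hwy'⟩
      have h3 : ({w} ∪ {y, y'} : Set V).ncard = 3 := by
        rw [Set.union_comm, Set.union_singleton,
          Set.ncard_insert_of_notMem hwmem (Set.toFinite _), Set.ncard_pair hne']
      have := Set.ncard_le_ncard hsub (Set.toFinite _)
      rw [h3] at this
      exact absurd (le_trans this (hdeg v)) (by norm_num)
    have huniqa := huniq a b hab rfl
    have huniqb := huniq b a hab.symm Sym2.eq_swap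
    -- the deleted edge is s(a,b); K.Adj a b means s(a,b) ∉ K'
    -- extension principle
    have hext : ∀ g : Sym2 V → Bool, ProperEC K' g → ∀ t : Bool,
        (∀ e' ∈ K'.edgeSet, (a ∈ e' ∨ b ∈ e') → g e' ≠ t) →
        ∃ g'' : Sym2 V → Bool, ProperEC K g'' := by
      intro g hg t ht
      refine ⟨fun e' => if e' = s(a, b) then t else g e', ?_⟩
      intro e₁ he₁ e₂ he₂ hne' ⟨x, hx₁, hx₂⟩
      by_cases h₁ : e₁ = s(a, b) <;> by_cases h₂ : e₂ = s(a, b)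
      · exact absurd (h₁.trans h₂.symm) hne'
      · have he₂' : e₂ ∈ K'.edgeSet := by rw [hKe]; exact ⟨he₂, h₂⟩
        have hax : a ∈ e₂ ∨ b ∈ e₂ := by
          subst h₁
          rcases Sym2.mem_iff.mp hx₁ with rfl | rfl
          · exact Or.inl hx₂
          · exact Or.inr hx₂
        simp only [if_pos h₁, if_neg h₂]
        exact (ht e₂ he₂' hax).symm
      · have he₁' : e₁ ∈ K'.edgeSet := by rw [hKe]; exact ⟨he₁, h₁⟩
        have hax : a ∈ e₁ ∨ b ∈ e₁ := by
          subst h₂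
          rcases Sym2.mem_iff.mp hx₂ with rfl | rfl
          · exact Or.inl hx₁
          · exact Or.inr hx₁
        simp only [if_pos h₂, if_neg h₁]
        exact ht e₁ he₁' hax
      · have he₁' : e₁ ∈ K'.edgeSet := by rw [hKe]; exact ⟨he₁, h₁⟩
        have he₂' : e₂ ∈ K'.edgeSet := by rw [hKe]; exact ⟨he₂, h₂⟩
        simp only [if_neg h₁, if_neg h₂]
        exact hg e₁ he₁' e₂ he₂' hne' ⟨x, hx₁, hx₂⟩
    -- characterize edges at a and b
    have hedgea : ∀ a' : V, K'.Adj a a' → ∀ e' ∈ K'.edgeSet, a ∈ e' → e' = s(a, a') := by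
      intro a' ha' e' he' hae
      obtain ⟨x, rfl, hx⟩ := edge_eq he' hae
      rw [huniqa x a' hx ha']
    have hedgeb : ∀ b' : V, K'.Adj b b' → ∀ e' ∈ K'.edgeSet, b ∈ e' → e' = s(b, b') := by
      intro b' hb' e' he' hbe
      obtain ⟨x, rfl, hx⟩ := edge_eq he' hbe
      rw [huniqb x b' hx hb']
    by_cases hA : ∃ a', K'.Adj a a'
    · obtain ⟨a', ha'⟩ := hA
      by_cases hB : ∃ b', K'.Adj b b'
      · obtain ⟨b', hb'⟩ := hB
        by_cases hgg : g' s(a, a') = g' s(b, b')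
        · refine hext g' hg' (!(g' s(a, a'))) ?_
          intro e' he' hor
          rcases hor with hae | hbe
          · rw [hedgea a' ha' e' he' hae]; cases g' s(a, a') <;> simp
          · rw [hedgeb b' hb' e' he' hbe, ← hgg]; cases g' s(a, a') <;> simp
        · by_cases hreach : K'.Reachable a b
          · exfalso
            obtain ⟨p, e₁, e₂, hp, h₁, h₂⟩ := path_ends hab.ne hreach
            have he₁ : e₁ ∈ K'.edgeSet := p.edges_subset_edgeSet (List.mem_of_mem_head? h₁)
            have he₂ : e₂ ∈ K'.edgeSet := p.edges_subset_edgeSet (List.mem_of_mem_getLast? h₂)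
            have hh₁ : e₁ = s(a, a') := hedgea a' ha' e₁ he₁ (head?_mem p h₁)
            have hh₂ : e₂ = s(b, b') := hedgeb b' hb' e₂ he₂ (getLast?_mem p h₂)
            have halt := alt_walk hg' p hp h₁ h₂
            rw [hh₁, hh₂] at halt
            have heven : Even p.length := by
              rcases Nat.even_or_odd p.length with h | h
              · exact h
              · exact absurd (halt.mpr h) hgg
            have := (walk_parity (properVC_mono hle hc) p).mpr heven
            exact hc hab this
          · -- flip colours on the component of a
            set g'' : Sym2 V → Bool := fun e' =>
              if (∀ x ∈ e', K'.connectedComponentMk x = K'.connectedComponentMk a)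
              then !(g' e') else g' e' with hg''def
            have hcond : ∀ e' ∈ K'.edgeSet, ∀ x ∈ e',
                ((∀ y ∈ e', K'.connectedComponentMk y = K'.connectedComponentMk a) ↔
                  K'.connectedComponentMk x = K'.connectedComponentMk a) := by
              intro e' he' x hx
              constructor
              · intro h; exact h x hx
              · intro h y hy
                obtain ⟨z, rfl, hz⟩ := edge_eq he' hx
                rcases Sym2.mem_iff.mp hy with rfl | rfl
                · exact h
                · rw [← h]; exact ConnectedComponent.sound hz.reachable.symm
            have hg'' : ProperEC K' g'' := by
              intro e₁ he₁ e₂ he₂ hne' ⟨x, hx₁, hx₂⟩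
              have hval := hg' e₁ he₁ e₂ he₂ hne' ⟨x, hx₁, hx₂⟩
              rw [hg''def]
              simp only
              by_cases hcx : K'.connectedComponentMk x = K'.connectedComponentMk a
              · rw [if_pos ((hcond e₁ he₁ x hx₁).mpr hcx),
                  if_pos ((hcond e₂ he₂ x hx₂).mpr hcx)]
                revert hval; cases g' e₁ <;> cases g' e₂ <;> simp
              · rw [if_neg (fun h => hcx ((hcond e₁ he₁ x hx₁).mp h)),
                  if_neg (fun h => hcx ((hcond e₂ he₂ x hx₂).mp h))]
                exact hval
            have hga : g'' s(a, a') = !(g' s(a, a')) := by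
              rw [hg''def]
              simp only
              rw [if_pos ((hcond _ (K'.mem_edgeSet.mpr ha') a (Sym2.mem_mk_left _ _)).mpr rfl)]
            have hmkb : K'.connectedComponentMk b ≠ K'.connectedComponentMk a := by
              intro h; exact hreach ((ConnectedComponent.exact h).symm)
            have hgb : g'' s(b, b') = g' s(b, b') := by
              rw [hg''def]
              simp only
              rw [if_neg (fun h => hmkb
                ((hcond _ (K'.mem_edgeSet.mpr hb') b (Sym2.mem_mk_left _ _)).mp h))]
            have hgg'' : g'' s(a, a') = g'' s(b, b') := by
              rw [hga, hgb]
              revert hgg; cases g' s(a, a') <;> cases g' s(b, b') <;> simp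
            refine hext g'' hg'' (!(g'' s(a, a'))) ?_
            intro e' he' hor
            rcases hor with hae | hbe
            · rw [hedgea a' ha' e' he' hae]; cases g'' s(a, a') <;> simp
            · rw [hedgeb b' hb' e' he' hbe, ← hgg'']; cases g'' s(a, a') <;> simp
      · refine hext g' hg' (!(g' s(a, a'))) ?_
        intro e' he' hor
        rcases hor with hae | hbe
        · rw [hedgea a' ha' e' he' hae]; cases g' s(a, a') <;> simp
        · obtain ⟨x, rfl, hx⟩ := edge_eq he' hbe
          exact absurd ⟨x, hx⟩ hB
    · by_cases hB : ∃ b', K'.Adj b b'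
      · obtain ⟨b', hb'⟩ := hB
        refine hext g' hg' (!(g' s(b, b'))) ?_
        intro e' he' hor
        rcases hor with hae | hbe
        · obtain ⟨x, rfl, hx⟩ := edge_eq he' hae
          exact absurd ⟨x, hx⟩ hA
        · rw [hedgeb b' hb' e' he' hbe]; cases g' s(b, b') <;> simp
      · refine hext g' hg' true ?_
        intro e' he' hor
        rcases hor with hae | hbe
        · obtain ⟨x, rfl, hx⟩ := edge_eq he' hae
          exact absurd ⟨x, hx⟩ hA
        · obtain ⟨x, rfl, hx⟩ := edge_eq he' hbe
          exact absurd ⟨x, hx⟩ hB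

-- decidable facts about S4Star
lemma ncard3 {a b c : Fin 5} (h1 : a ≠ b) (h2 : a ≠ c) (h3 : b ≠ c) :
    ({a, b, c} : Set (Fin 5)).ncard = 3 := by
  rw [Set.ncard_insert_of_notMem (by simp [h1, h2]) (Set.toFinite _),
    Set.ncard_insert_of_notMem (by simp [h3]) (Set.toFinite _), Set.ncard_singleton]

lemma S4Star_ncard (i : Fin 3) : (S4Star i).ncard = 3 := by
  fin_cases i
  · exact ncard3 (by decide) (by decide) (by decide)
  · exact ncard3 (by decide) (by decide) (by decide)
  · exact ncard3 (by decide) (by decide) (by decide)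

def pick1 : Fin 3 → Fin 5 := ![3, 3, 0]
def pick2 : Fin 3 → Fin 5 := ![4, 4, 0]

lemma pick1_mem (i : Fin 3) : pick1 i ∈ S4Star i ∧ pick1 i ∈ ({0, 3} : Set (Fin 5)) := by
  fin_cases i <;> simp [pick1, S4Star]
lemma pick1_uniq (i : Fin 3) : ∀ t ∈ S4Star i, t ∈ ({0, 3} : Set (Fin 5)) → t = pick1 i := by
  fin_cases i <;> · intro t ht ht'; simp only [S4Star, pick1] at * <;> rcases ht' with rfl | rfl <;> simp_all
lemma pick2_mem (i : Fin 3) : pick2 i ∈ S4Star i ∧ pick2 i ∈ ({0, 4} : Set (Fin 5)) := by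
  fin_cases i <;> simp [pick2, S4Star]
lemma pick2_uniq (i : Fin 3) : ∀ t ∈ S4Star i, t ∈ ({0, 4} : Set (Fin 5)) → t = pick2 i := by
  fin_cases i <;> · intro t ht ht'; simp only [S4Star, pick2] at * <;> rcases ht' with rfl | rfl <;> simp_all

section Fwd
variable [Fintype V] {G : SimpleGraph V}

/-- the matching subgraph given by a set of colours -/
def colSub (G : SimpleGraph V) (f : Sym2 V → Fin 5) (S : Set (Fin 5)) : G.Subgraph where
  verts := Set.univ
  Adj a b := G.Adj a b ∧ f s(a, b) ∈ S
  adj_sub h := h.1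
  edge_vert _ := trivial
  symm := ⟨fun a b h => ⟨h.1.symm, Sym2.eq_swap ▸ h.2⟩⟩

lemma forward (hcubic : IsCubic G) (hS4 : HasS4Coloring G) :
    ∃ M1 M2 : G.Subgraph, M1.IsPerfectMatching ∧ M2.IsPerfectMatching ∧
      (G.deleteEdges (M1.edgeSet ∪ M2.edgeSet)).Colorable 2 := by
  classical
  obtain ⟨f, hf, hstar⟩ := hS4
  -- surjectivity of colours at each vertex
  have key : ∀ u : V, ∀ i : Fin 3, (∀ e ∈ G.edgeSet, u ∈ e → f e ∈ S4Star i) →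
      ∀ t ∈ S4Star i, ∃ w ∈ G.neighborSet u, f s(u, w) = t := by
    intro u i hi t ht
    have hinj : Set.InjOn (fun w => f s(u, w)) (G.neighborSet u) := by
      intro w hw w' hw' hff
      by_contra hne
      exact hf s(u, w) (G.mem_edgeSet.mpr hw) s(u, w') (G.mem_edgeSet.mpr hw')
        (fun h => hne (Sym2.congr_right.mp h))
        ⟨u, Sym2.mem_mk_left _ _, Sym2.mem_mk_left _ _⟩ hff
    have hsub : (fun w => f s(u, w)) '' (G.neighborSet u) ⊆ S4Star i := by
      rintro - ⟨w, hw, rfl⟩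
      exact hi s(u, w) (G.mem_edgeSet.mpr hw) (Sym2.mem_mk_left _ _)
    have hcard : ((fun w => f s(u, w)) '' (G.neighborSet u)).ncard = (S4Star i).ncard := by
      rw [Set.ncard_image_of_injOn hinj, hcubic u, S4Star_ncard]
    have heq : (fun w => f s(u, w)) '' (G.neighborSet u) = S4Star i :=
      Set.eq_of_subset_of_ncard_le hsub (le_of_eq hcard.symm) (Set.toFinite _)
    rw [← heq] at ht
    obtain ⟨w, hw, hfw⟩ := ht
    exact ⟨w, hw, hfw⟩
  have mkPM : ∀ (S : Set (Fin 5)) (pk : Fin 3 → Fin 5),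
      (∀ i, pk i ∈ S4Star i ∧ pk i ∈ S) → (∀ i, ∀ t ∈ S4Star i, t ∈ S → t = pk i) →
      (colSub G f S).IsPerfectMatching := by
    intro S pk hpk hpuniq
    rw [Subgraph.isPerfectMatching_iff]
    intro u
    obtain ⟨i, hi⟩ := hstar u
    obtain ⟨w, hw, hfw⟩ := key u i hi (pk i) (hpk i).1
    refine ⟨w, ⟨hw, by rw [hfw]; exact (hpk i).2⟩, ?_⟩
    rintro w' ⟨hw', hfw'⟩
    have h1 : f s(u, w') ∈ S4Star i := hi _ (G.mem_edgeSet.mpr hw') (Sym2.mem_mk_left _ _)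
    have h2 : f s(u, w') = pk i := hpuniq i _ h1 hfw'
    by_contra hne
    exact hf s(u, w') (G.mem_edgeSet.mpr hw') s(u, w) (G.mem_edgeSet.mpr hw)
      (fun h => hne (Sym2.congr_right.mp h))
      ⟨u, Sym2.mem_mk_left _ _, Sym2.mem_mk_left _ _⟩ (h2.trans hfw.symm)
  have hM1 := mkPM {0, 3} pick1 pick1_mem (fun i => pick1_uniq i)
  have hM2 := mkPM {0, 4} pick2 pick2_mem (fun i => pick2_uniq i)
  refine ⟨_, _, hM1, hM2, ?_⟩
  -- colour the rest
  set K := G.deleteEdges ((colSub G f {0, 3}).edgeSet ∪ (colSub G f {0, 4}).edgeSet) with hK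
  have hKadj : ∀ {x y : V}, K.Adj x y → G.Adj x y ∧ f s(x, y) ∉ ({0, 3} : Set (Fin 5)) ∧
      f s(x, y) ∉ ({0, 4} : Set (Fin 5)) := by
    intro x y hxy
    rw [hK, SimpleGraph.deleteEdges_adj] at hxy
    obtain ⟨hxy, hmem⟩ := hxy
    rw [Set.mem_union] at hmem
    push_neg at hmem
    refine ⟨hxy, ?_, ?_⟩
    · intro h; exact hmem.1 (Subgraph.mem_edgeSet.mpr ⟨hxy, h⟩)
    · intro h; exact hmem.2 (Subgraph.mem_edgeSet.mpr ⟨hxy, h⟩)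
  have h12 : ∀ t : Fin 5, t ∉ ({0, 3} : Set (Fin 5)) → t ∉ ({0, 4} : Set (Fin 5)) →
      t = 1 ∨ t = 2 := by
    intro t h1 h2
    fin_cases t <;> simp_all
  have hg : ProperEC K (fun e => f e == 2) := by
    intro e₁ he₁ e₂ he₂ hne hsh
    have hle : K ≤ G := G.deleteEdges_le _
    have hff := hf e₁ (SimpleGraph.edgeSet_mono hle he₁) e₂ (SimpleGraph.edgeSet_mono hle he₂)
      hne hsh
    have hv : ∀ e ∈ K.edgeSet, f e = 1 ∨ f e = 2 := by
      intro e he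
      induction e with
      | _ x y =>
        have := hKadj (K.mem_edgeSet.mp he)
        exact h12 _ this.2.1 this.2.2
    rcases hv e₁ he₁ with h | h <;> rcases hv e₂ he₂ with h' | h'
    · exact absurd (h.trans h'.symm) hff
    · simp [h, h']
    · simp [h, h']
    · exact absurd (h.trans h'.symm) hff
  obtain ⟨c, hc⟩ := lemA K _ hg
  have := (SimpleGraph.Coloring.mk c (fun h => hc h) : K.Coloring Bool).colorable
  simpa using this
end Fwd

lemma matching_edge {G : SimpleGraph V} {M : G.Subgraph} (hM : M.IsPerfectMatching)
    {v w : V} (hw : M.Adj v w) {e : Sym2 V} (he : e ∈ M.edgeSet) (hv : v ∈ e) :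
    e = s(v, w) := by
  obtain ⟨w', hw', hu⟩ := hM.1 (M.edge_vert hw)
  have hww' : w = w' := hu w hw
  induction e with
  | _ x y =>
    rw [Subgraph.mem_edgeSet] at he
    rcases Sym2.mem_iff.mp hv with rfl | rfl
    · rw [hww', hu y he]
    · rw [hww', hu x he.symm, Sym2.eq_swap]

lemma subedge_eq {G : SimpleGraph V} {M : G.Subgraph} {e : Sym2 V} (he : e ∈ M.edgeSet)
    {x : V} (hx : x ∈ e) : ∃ z, e = s(x, z) ∧ M.Adj x z := by
  induction e with
  | _ p q =>
    rw [Subgraph.mem_edgeSet] at he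
    rcases Sym2.mem_iff.mp hx with rfl | rfl
    · exact ⟨q, rfl, he⟩
    · exact ⟨p, Sym2.eq_swap, he.symm⟩

lemma backward [Fintype V] {G : SimpleGraph V} (hcubic : IsCubic G)
    {M1 M2 : G.Subgraph} (hM1 : M1.IsPerfectMatching) (hM2 : M2.IsPerfectMatching)
    (hcol : (G.deleteEdges (M1.edgeSet ∪ M2.edgeSet)).Colorable 2) :
    HasS4Coloring G := by
  classical
  set K := G.deleteEdges (M1.edgeSet ∪ M2.edgeSet) with hK
  have hKe : K.edgeSet = G.edgeSet \ (M1.edgeSet ∪ M2.edgeSet) := G.edgeSet_deleteEdges _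
  -- proper vertex colouring of K
  obtain ⟨C⟩ := hcol
  have hbool : ∀ p q : Fin 2, p ≠ q → decide (p = 1) ≠ decide (q = 1) := by decide
  have hc : ProperVC K (fun v => decide (C v = 1)) := fun x y hxy => hbool _ _ (C.valid hxy)
  -- partners
  have hpart : ∀ (M : G.Subgraph), M.IsPerfectMatching → ∀ u, ∃ w, M.Adj u w :=
    fun M hM u => ⟨(hM.1 (hM.2 u)).choose, (hM.1 (hM.2 u)).choose_spec.1⟩
  have huniqM : ∀ (M : G.Subgraph), M.IsPerfectMatching →
      ∀ u y y', M.Adj u y → M.Adj u y' → y = y' := by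
    intro M hM u y y' hy hy'
    obtain ⟨w', -, hu⟩ := hM.1 (hM.2 u)
    rw [hu y hy, hu y' hy']
  -- degree bound for K
  have hdeg : ∀ v : V, (K.neighborSet v).ncard ≤ 2 := by
    intro v
    obtain ⟨w1, hw1⟩ := hpart M1 hM1 v
    have hsub : K.neighborSet v ⊆ G.neighborSet v \ {w1} := by
      intro y hy
      have hy' : K.Adj v y := hy
      rw [hK, SimpleGraph.deleteEdges_adj] at hy'
      refine ⟨hy'.1, ?_⟩
      intro h
      rw [Set.mem_singleton_iff] at h
      subst h
      exact hy'.2 (Set.mem_union_left _ (Subgraph.mem_edgeSet.mpr hw1))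
    refine le_trans (Set.ncard_le_ncard hsub (Set.toFinite _)) ?_
    have hw1m : w1 ∈ G.neighborSet v := hw1.adj_sub
    rw [Set.ncard_diff_singleton_of_mem hw1m, hcubic v]
  obtain ⟨g, hg⟩ := lemB K hdeg _ hc
  -- define the colouring
  set f : Sym2 V → Fin 5 := fun e =>
    if e ∈ M1.edgeSet then (if e ∈ M2.edgeSet then 0 else 3)
    else if e ∈ M2.edgeSet then 4 else (if g e then 2 else 1) with hfdef
  have hfval : ∀ e : Sym2 V,
      (e ∈ M1.edgeSet → e ∈ M2.edgeSet → f e = 0) ∧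
      (e ∈ M1.edgeSet → e ∉ M2.edgeSet → f e = 3) ∧
      (e ∉ M1.edgeSet → e ∈ M2.edgeSet → f e = 4) ∧
      (e ∉ M1.edgeSet → e ∉ M2.edgeSet → (f e = if g e then 2 else 1)) := by
    intro e
    refine ⟨fun h1 h2 => ?_, fun h1 h2 => ?_, fun h1 h2 => ?_, fun h1 h2 => ?_⟩ <;>
      simp [hfdef, h1, h2]
  -- K-edge criterion
  have hKedge : ∀ e ∈ G.edgeSet, e ∉ M1.edgeSet → e ∉ M2.edgeSet → e ∈ K.edgeSet := by
    intro e he h1 h2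
    rw [hKe]
    exact ⟨he, fun h => h.elim h1 h2⟩
  refine ⟨f, ?_, ?_⟩
  · -- properness
    intro e₁ he₁ e₂ he₂ hne hsh
    obtain ⟨x, hx₁, hx₂⟩ := hsh
    have hsame : ∀ (M : G.Subgraph), M.IsPerfectMatching →
        e₁ ∈ M.edgeSet → e₂ ∈ M.edgeSet → False := by
      intro M hM h1 h2
      obtain ⟨z, rfl, hz⟩ := subedge_eq h1 hx₁
      exact hne (matching_edge hM hz h2 hx₂).symm
    obtain ⟨h1a, h1b, h1c, h1d⟩ := hfval e₁
    obtain ⟨h2a, h2b, h2c, h2d⟩ := hfval e₂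
    have hval : ∀ e ∈ G.edgeSet,
        (e ∈ M1.edgeSet ∧ e ∈ M2.edgeSet ∧ f e = 0) ∨
        (e ∈ M1.edgeSet ∧ e ∉ M2.edgeSet ∧ f e = 3) ∨
        (e ∉ M1.edgeSet ∧ e ∈ M2.edgeSet ∧ f e = 4) ∨
        (e ∉ M1.edgeSet ∧ e ∉ M2.edgeSet ∧ (f e = 1 ∨ f e = 2)) := by
      intro e he
      obtain ⟨ha, hb, hc', hd⟩ := hfval e
      by_cases m1 : e ∈ M1.edgeSet
      · by_cases m2 : e ∈ M2.edgeSet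
        · exact Or.inl ⟨m1, m2, ha m1 m2⟩
        · exact Or.inr (Or.inl ⟨m1, m2, hb m1 m2⟩)
      · by_cases m2 : e ∈ M2.edgeSet
        · exact Or.inr (Or.inr (Or.inl ⟨m1, m2, hc' m1 m2⟩))
        · refine Or.inr (Or.inr (Or.inr ⟨m1, m2, ?_⟩))
          rw [hd m1 m2]
          cases g e
          · exact Or.inl rfl
          · exact Or.inr rfl
    have hgK : e₁ ∉ M1.edgeSet → e₁ ∉ M2.edgeSet → e₂ ∉ M1.edgeSet → e₂ ∉ M2.edgeSet →
        f e₁ ≠ f e₂ := by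
      intro a1 a2 b1 b2
      have hK1 := hKedge e₁ he₁ a1 a2
      have hK2 := hKedge e₂ he₂ b1 b2
      have hgne := hg e₁ hK1 e₂ hK2 hne ⟨x, hx₁, hx₂⟩
      rw [h1d a1 a2, h2d b1 b2]
      revert hgne
      cases g e₁ <;> cases g e₂ <;> simp
    rcases hval e₁ he₁ with ⟨a1, a2, av⟩ | ⟨a1, a2, av⟩ | ⟨a1, a2, av⟩ | ⟨a1, a2, av⟩ <;>
      rcases hval e₂ he₂ with ⟨b1, b2, bv⟩ | ⟨b1, b2, bv⟩ | ⟨b1, b2, bv⟩ | ⟨b1, b2, bv⟩ <;>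
      first
        | exact absurd (hsame M1 hM1 a1 b1) not_false
        | exact absurd (hsame M2 hM2 a2 b2) not_false
        | exact hgK a1 a2 b1 b2
        | (rw [av, bv]; decide)
        | (rcases av with av | av <;> rw [av, bv] <;> decide)
        | (rcases bv with bv | bv <;> rw [av, bv] <;> decide)
  · -- star condition
    intro u
    obtain ⟨w1, hw1⟩ := hpart M1 hM1 u
    obtain ⟨w2, hw2⟩ := hpart M2 hM2 u
    by_cases hz : s(u, w1) ∈ M2.edgeSet
    · refine ⟨2, ?_⟩
      intro e he hue
      by_cases m1 : e ∈ M1.edgeSet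
      · have : e = s(u, w1) := matching_edge hM1 hw1 m1 hue
        rw [(hfval e).1 m1 (this ▸ hz)]
        simp [S4Star]
      · by_cases m2 : e ∈ M2.edgeSet
        · exfalso
          have h1 : e = s(u, w2) := matching_edge hM2 hw2 m2 hue
          have h2 : s(u, w1) = s(u, w2) :=
            matching_edge hM2 hw2 hz (Sym2.mem_mk_left _ _)
          rw [h1, ← h2] at m1
          exact m1 (Subgraph.mem_edgeSet.mpr hw1)
        · rw [(hfval e).2.2.2 m1 m2]
          cases g e <;> simp [S4Star]
    · -- u has M1-edge ≠ M2-edge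
      have hw12 : w1 ≠ w2 := by
        rintro rfl
        exact hz (Subgraph.mem_edgeSet.mpr hw2)
      have hm2w1 : s(u, w2) ∉ M1.edgeSet := by
        intro h
        have heq := matching_edge hM1 hw1 h (Sym2.mem_mk_left _ _)
        exact hz (heq ▸ Subgraph.mem_edgeSet.mpr hw2)
      -- at most one K-neighbour of u
      have hKuniq : ∀ y y' : V, K.Adj u y → K.Adj u y' → y = y' := by
        intro y y' hy hy'
        by_contra hne'
        have hsub : ({y, y'} : Set V) ⊆ G.neighborSet u \ {w1, w2} := by
          have hmem : ∀ z, K.Adj u z → z ∈ G.neighborSet u \ {w1, w2} := by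
            intro z hzadj
            have hz' : K.Adj u z := hzadj
            rw [hK, SimpleGraph.deleteEdges_adj] at hz'
            refine ⟨hz'.1, ?_⟩
            intro hmem'
            rcases hmem' with rfl | hmem'
            · exact hz'.2 (Set.mem_union_left _ (Subgraph.mem_edgeSet.mpr hw1))
            · rw [Set.mem_singleton_iff] at hmem'
              subst hmem'
              exact hz'.2 (Set.mem_union_right _ (Subgraph.mem_edgeSet.mpr hw2))
          rintro z (rfl | hz')
          · exact hmem _ hy
          · rw [Set.mem_singleton_iff] at hz'; subst hz'; exact hmem _ hy'
        have hw1m : w1 ∈ G.neighborSet u := hw1.adj_sub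
        have hw2m : w2 ∈ G.neighborSet u := hw2.adj_sub
        have hsub2 : ({w1, w2} : Set V) ⊆ G.neighborSet u := by
          rintro z (rfl | hz')
          · exact hw1m
          · rw [Set.mem_singleton_iff] at hz'; subst hz'; exact hw2m
        have hd : (G.neighborSet u \ {w1, w2}).ncard = 1 := by
          rw [Set.ncard_diff hsub2 (Set.toFinite _), Set.ncard_pair hw12, hcubic u]
        have := Set.ncard_le_ncard hsub (Set.toFinite _)
        rw [Set.ncard_pair hne', hd] at this
        omega
      by_cases hex : ∃ y, K.Adj u y
      · obtain ⟨y0, hy0⟩ := hex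
        refine ⟨if g s(u, y0) then 1 else 0, ?_⟩
        intro e he hue
        by_cases m1 : e ∈ M1.edgeSet
        · have heq : e = s(u, w1) := matching_edge hM1 hw1 m1 hue
          have h3 : f e = 3 := (hfval e).2.1 m1 (fun hh => hz (heq ▸ hh))
          rw [h3]
          cases g s(u, y0) <;> simp [S4Star]
        · by_cases m2 : e ∈ M2.edgeSet
          · rw [(hfval e).2.2.1 m1 m2]
            cases g s(u, y0) <;> simp [S4Star]
          · have hKm : e ∈ K.edgeSet := hKedge e he m1 m2
            obtain ⟨y, rfl, hy⟩ : ∃ y, e = s(u, y) ∧ K.Adj u y := by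
              induction e with
              | _ p q =>
                rw [mem_edgeSet] at hKm
                rcases Sym2.mem_iff.mp hue with rfl | rfl
                · exact ⟨q, rfl, hKm⟩
                · exact ⟨p, Sym2.eq_swap, hKm.symm⟩
            have : y = y0 := hKuniq y y0 hy hy0
            subst this
            rw [(hfval _).2.2.2 m1 m2]
            cases g s(u, y) <;> simp [S4Star]
      · refine ⟨0, ?_⟩
        intro e he hue
        by_cases m1 : e ∈ M1.edgeSet
        · have heq : e = s(u, w1) := matching_edge hM1 hw1 m1 hue
          have h3 : f e = 3 := (hfval e).2.1 m1 (fun hh => hz (heq ▸ hh))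
          rw [h3]
          simp [S4Star]
        · by_cases m2 : e ∈ M2.edgeSet
          · rw [(hfval e).2.2.1 m1 m2]
            simp [S4Star]
          · exfalso
            have hKm : e ∈ K.edgeSet := hKedge e he m1 m2
            obtain ⟨y, rfl, hy⟩ : ∃ y, e = s(u, y) ∧ K.Adj u y := by
              induction e with
              | _ p q =>
                rw [mem_edgeSet] at hKm
                rcases Sym2.mem_iff.mp hue with rfl | rfl
                · exact ⟨q, rfl, hKm⟩
                · exact ⟨p, Sym2.eq_swap, hKm.symm⟩
            exact hex ⟨y, hy⟩

end Aux

/-- A bridgeless cubic graph admits an `S₄`-colouring iff it has two perfect matchings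
whose union has bipartite complement (an `S₄`-pair). -/

theorem stmt_7 {V : Type*} [Fintype V] (G : SimpleGraph V)
    (hcubic : IsCubic G) (hbridgeless : Bridgeless G) :
    HasS4Coloring G ↔
      ∃ M1 M2 : G.Subgraph, M1.IsPerfectMatching ∧ M2.IsPerfectMatching ∧
        (G.deleteEdges (M1.edgeSet ∪ M2.edgeSet)).Colorable 2 := by
  constructor
  · exact fun h => forward hcubic h
  · rintro ⟨M1, M2, h1, h2, h3⟩
    exact backward hcubic h1 h2 h3
end

section
/- The Petersen graph has no perfect matching whose complement is bipartite. -/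
open SimpleGraph

/-- The Petersen graph as the Kneser graph `K(5,2)`: vertices are the 2-element
subsets of a 5-element set, adjacent iff disjoint. -/
def petersen : SimpleGraph {s : Finset (Fin 5) // s.card = 2} where
  Adj a b := Disjoint a.1 b.1
  symm := ⟨fun a b h => h.symm⟩
  loopless := ⟨by
    intro a h
    have h2 := a.2
    rw [disjoint_self] at h
    simp [h] at h2⟩


abbrev PV := {s : Finset (Fin 5) // s.card = 2}

instance : DecidableRel petersen.Adj := fun a b =>
  inferInstanceAs (Decidable (Disjoint a.1 b.1))

def nb : Fin 10 → Nat := ![896, 608, 336, 176, 524, 266, 134, 73, 37, 19]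

def pe : Fin 10 → PV :=
  ![⟨{0,1}, by decide⟩, ⟨{0,2}, by decide⟩, ⟨{0,3}, by decide⟩, ⟨{0,4}, by decide⟩,
    ⟨{1,2}, by decide⟩, ⟨{1,3}, by decide⟩, ⟨{1,4}, by decide⟩, ⟨{2,3}, by decide⟩,
    ⟨{2,4}, by decide⟩, ⟨{3,4}, by decide⟩]

lemma pe_surj : ∀ v : PV, ∃ i : Fin 10, pe i = v := by decide

lemma pe_inj : ∀ i j : Fin 10, pe i = pe j → i = j := by decide

lemma adj_pe : ∀ i j : Fin 10, petersen.Adj (pe i) (pe j) ↔ Nat.testBit (nb i) j.val := by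
  decide

def icnt (m : Nat) (i : Fin 10) : ℕ :=
  (Finset.univ.filter fun j : Fin 10 =>
    Nat.testBit (nb i) j.val ∧ (Nat.testBit m i.val ↔ Nat.testBit m j.val)).card

def P (m : Nat) : Prop :=
  (∃ i : Fin 10, 2 ≤ icnt m i) ∨
  ((Finset.univ.filter fun i : Fin 10 => Nat.testBit m i.val ∧ icnt m i = 0).card ≠
   (Finset.univ.filter fun i : Fin 10 => ¬ Nat.testBit m i.val ∧ icnt m i = 0).card)

instance (m : Nat) : Decidable (P m) := by unfold P; infer_instance

set_option maxRecDepth 100000 in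
lemma core : ∀ k : Fin 512, P (2 * k.val + 1) := by decide

def maskOf (l : List Bool) : Nat := l.foldr (fun b acc => b.toNat + 2 * acc) 0

lemma testBit_maskOf (l : List Bool) (j : ℕ) :
    (maskOf l).testBit j = l.getD j false := by
  induction l generalizing j with
  | nil => simp [maskOf, Nat.testBit]
  | cons b t ih =>
    cases j with
    | zero =>
      show (b.toNat + 2 * maskOf t).testBit 0 = b
      cases b <;> simp [Nat.testBit_zero] <;> omega
    | succ n =>
      show (b.toNat + 2 * maskOf t).testBit (n + 1) = (b :: t).getD (n + 1) false
      rw [List.getD_cons_succ, ← ih, Nat.testBit_succ]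
      congr 1
      cases b <;> simp <;> omega

lemma maskOf_lt (l : List Bool) : maskOf l < 2 ^ l.length := by
  induction l with
  | nil => simp [maskOf]
  | cons b t ih =>
    simp only [maskOf, List.foldr, List.length_cons, pow_succ]
    cases b <;> simp [maskOf] at ih ⊢ <;> omega

lemma fin2_iff : ∀ a b : Fin 2, ((a = 0) ↔ (b = 0)) ↔ a = b := by decide

lemma fin2_ne : ∀ a : Fin 2, a ≠ 0 ↔ a = 1 := by decide

lemma fin2_ne' : ∀ a : Fin 2, a ≠ 1 ↔ a = 0 := by decide

/-- The Petersen graph has no perfect matching whose complement is bipartite. -/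
theorem stmt_10 :
    ¬ ∃ M : petersen.Subgraph, M.IsPerfectMatching ∧
      (petersen.deleteEdges M.edgeSet).Colorable 2 := by
  rintro ⟨M, ⟨hmatch, hspan⟩, hcol⟩
  obtain ⟨c0⟩ := hcol
  classical
  -- normalize coloring so that pe 0 gets color 0
  set c : PV → Fin 2 := fun v => c0 v + c0 (pe 0) with hc
  have hc0 : c (pe 0) = 0 := by
    simp only [hc]
    have : ∀ a : Fin 2, a + a = 0 := by decide
    exact this _
  have hvalid : ∀ {v w : PV}, (petersen.deleteEdges M.edgeSet).Adj v w → c v ≠ c w := by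
    intro v w h hvw
    simp only [hc] at hvw
    exact c0.valid h (add_right_cancel hvw)
  -- matching partner function
  have hpart : ∀ v : PV, ∃! w, M.Adj v w := fun v => hmatch (hspan v)
  set f : PV → PV := fun v => (hpart v).choose with hfdef
  have hf : ∀ v, M.Adj v (f v) := fun v => (hpart v).choose_spec.1
  have hu : ∀ v w, M.Adj v w → w = f v := fun v w h => (hpart v).choose_spec.2 w h
  have finv : ∀ v, f (f v) = v := fun v => (hu (f v) v (hf v).symm).symm
  -- edges between same-colored vertices are matching edges
  have hsame : ∀ v w, petersen.Adj v w → c v = c w → M.Adj v w := by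
    intro v w hadj hcc
    by_contra hM
    exact hvalid (SimpleGraph.deleteEdges_adj.mpr
      ⟨hadj, fun h => hM (Subgraph.mem_edgeSet.mp h)⟩) hcc
  -- the mask
  set g : Fin 10 → Bool := fun i => decide (c (pe i) = 0) with hg
  set m : Nat := maskOf (List.ofFn g) with hm
  have tb : ∀ i : Fin 10, m.testBit i.val ↔ c (pe i) = 0 := by
    intro i
    rw [hm, testBit_maskOf]
    have hlen : i.val < (List.ofFn g).length := by simp [i.isLt]
    rw [List.getD_eq_getElem _ _ hlen, List.getElem_ofFn]
    simp [hg]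
  -- icnt filter semantics
  have icnt_iff : ∀ (i j : Fin 10),
      (j ∈ Finset.univ.filter fun j : Fin 10 =>
        Nat.testBit (nb i) j.val ∧ (Nat.testBit m i.val ↔ Nat.testBit m j.val)) ↔
      (petersen.Adj (pe i) (pe j) ∧ c (pe i) = c (pe j)) := by
    intro i j
    simp only [Finset.mem_filter, Finset.mem_univ, true_and]
    rw [← adj_pe]
    constructor
    · rintro ⟨h1, h2⟩
      exact ⟨h1, (fin2_iff _ _).mp (by rw [← tb, ← tb]; exact h2)⟩
    · rintro ⟨h1, h2⟩
      exact ⟨h1, by rw [tb, tb]; exact (fin2_iff _ _).mpr h2⟩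
  have mem_partner : ∀ (i j : Fin 10),
      (j ∈ Finset.univ.filter fun j : Fin 10 =>
        Nat.testBit (nb i) j.val ∧ (Nat.testBit m i.val ↔ Nat.testBit m j.val)) →
      pe j = f (pe i) := by
    intro i j hj
    obtain ⟨hadj, hcc⟩ := (icnt_iff i j).mp hj
    exact hu _ _ (hsame _ _ hadj hcc)
  have hicnt1 : ∀ i : Fin 10, icnt m i ≤ 1 := by
    intro i
    rw [icnt, Finset.card_le_one]
    intro a ha b hb
    exact pe_inj a b ((mem_partner i a ha).trans (mem_partner i b hb).symm)
  -- icnt = 0 iff partner has different color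
  have icnt0 : ∀ i : Fin 10, icnt m i = 0 ↔ c (f (pe i)) ≠ c (pe i) := by
    intro i
    rw [icnt, Finset.card_eq_zero, Finset.eq_empty_iff_forall_notMem]
    constructor
    · intro h hcc
      obtain ⟨j, hj⟩ := pe_surj (f (pe i))
      refine h j ((icnt_iff i j).mpr ⟨?_, ?_⟩)
      · rw [hj]; exact M.adj_sub (hf (pe i))
      · rw [hj, hcc]
    · intro hne j hj
      obtain ⟨hadj, hcc⟩ := (icnt_iff i j).mp hj
      have hpj := mem_partner i j hj
      exact hne (by rw [← hpj, ← hcc])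
  -- m is odd and small
  have hb0 : m.testBit 0 = true := by
    simpa using (tb 0).mpr hc0
  have hmodd : m % 2 = 1 := by simpa [Nat.testBit_zero] using hb0
  have hmlt : m < 1024 := by
    have h := maskOf_lt (List.ofFn g)
    rw [hm]
    simpa using h
  -- apply the core lemma
  have hP : P m := by
    have h2 : m / 2 < 512 := by omega
    have hco := core ⟨m / 2, h2⟩
    have hmeq : 2 * (m / 2) + 1 = m := by omega
    rwa [hmeq] at hco
  rcases hP with h | h
  · obtain ⟨i, hi⟩ := h
    exact absurd (hicnt1 i) (by omega)
  · apply h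
    have idx_spec : ∀ v : PV, pe ((pe_surj v).choose) = v := fun v => (pe_surj v).choose_spec
    refine Finset.card_bij (fun i _ => (pe_surj (f (pe i))).choose) ?_ ?_ ?_
    · intro i hi
      simp only [Finset.mem_filter, Finset.mem_univ, true_and] at hi ⊢
      obtain ⟨h1, h2⟩ := hi
      rw [tb] at h1
      have h3 := (icnt0 i).mp h2
      refine ⟨?_, ?_⟩
      · rw [tb, idx_spec]
        intro hc'
        exact h3 (hc'.trans h1.symm)
      · rw [icnt0, idx_spec, finv]
        exact fun h4 => h3 h4.symm
    · intro a ha b hb hab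
      have h1 := congrArg pe hab
      rw [idx_spec, idx_spec] at h1
      have h2 := congrArg f h1
      rw [finv, finv] at h2
      exact pe_inj a b h2
    · intro j hj
      simp only [Finset.mem_filter, Finset.mem_univ, true_and] at hj
      obtain ⟨h1, h2⟩ := hj
      rw [tb] at h1
      have h3 := (icnt0 j).mp h2
      refine ⟨(pe_surj (f (pe j))).choose, ?_, ?_⟩
      · simp only [Finset.mem_filter, Finset.mem_univ, true_and]
        refine ⟨?_, ?_⟩
        · rw [tb, idx_spec]
          exact (fin2_ne' _).mp (fun h4 => h3 (h4.trans ((fin2_ne _).mp h1).symm))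
        · rw [icnt0, idx_spec, finv]
          exact fun h4 => h3 h4.symm
      · apply pe_inj
        rw [idx_spec, idx_spec, finv]
end

section
/- Let G be a bridgeless cubic graph, and let N be a perfect matching of G intersecting every 3-edge-cut of G in exactly one edge. Define w(e) = 1/5 if e ∈ N and w(e) = 2/5 otherwise. Then w is a fractional perfect matching of G. -/
open SimpleGraph

/-- A fractional perfect matching: weights in `[0,1]`, total weight 1 at each
vertex, and total weight at least 1 on each odd cut. -/
def IsFractionalPerfectMatching {V : Type*} (G : SimpleGraph V) (w : Sym2 V → ℝ) : Prop :=
  (∀ e ∈ G.edgeSet, w e ∈ Set.Icc (0 : ℝ) 1) ∧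
  (∀ v : V, ∑ᶠ e ∈ G.incidenceSet v, w e = 1) ∧
  (∀ W : Finset V, Odd W.card → 1 ≤ ∑ᶠ e ∈ edgeBoundary G (W : Set V), w e)

section Helpers

variable {V : Type*}

/-- Any walk from inside `W` to outside `W` uses an edge of the boundary. -/
private lemma walk_cross {G : SimpleGraph V} {W : Set V} {a b : V} (p : G.Walk a b) :
    a ∈ W → b ∉ W → ∃ e ∈ p.edges, e ∈ edgeBoundary G W := by
  induction p with
  | nil => intro ha hb; exact absurd ha hb
  | @cons u v c h q ih =>
    intro ha hb
    by_cases hv : v ∈ W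
    · obtain ⟨e, he, hbd⟩ := ih hv hb
      exact ⟨e, by simp [Walk.edges_cons, he], hbd⟩
    · exact ⟨s(u, v), by simp [Walk.edges_cons],
        ⟨(G.mem_edgeSet).mpr h, u, v, rfl, ha, hv⟩⟩

/-- A sum of weights over a 3-element set, exactly one element having weight 1/5
and the others 2/5, equals 1. -/
private lemma sum135 {α : Type*} (S : Finset α) (P : α → Prop) [DecidablePred P]
    (w : α → ℝ) (h3 : S.card = 3) (h1 : (S.filter P).card = 1)
    (hw1 : ∀ e ∈ S, P e → w e = 1 / 5) (hw2 : ∀ e ∈ S, ¬P e → w e = 2 / 5) :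
    ∑ e ∈ S, w e = 1 := by
  have h2 : (S.filter fun e => ¬ P e).card = 2 := by
    have := Finset.card_filter_add_card_filter_not (s := S) (p := P)
    omega
  rw [← Finset.sum_filter_add_sum_filter_not S P]
  have e1 : ∑ e ∈ S.filter P, w e = 1 / 5 := by
    rw [Finset.sum_congr rfl (fun e he => hw1 e (Finset.mem_filter.mp he).1
      (Finset.mem_filter.mp he).2), Finset.sum_const, h1]
    norm_num
  have e2 : ∑ e ∈ S.filter (fun e => ¬ P e), w e = 4 / 5 := by
    rw [Finset.sum_congr rfl (fun e he => hw2 e (Finset.mem_filter.mp he).1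
      (Finset.mem_filter.mp he).2), Finset.sum_const, h2]
    norm_num
  rw [e1, e2]; norm_num

/-- In a cubic graph, the edge boundary of a set of odd cardinality has odd
cardinality. -/
private lemma cut_parity [Fintype V] (G : SimpleGraph V) (hcubic : IsCubic G)
    (W : Finset V) (hW : Odd W.card) : Odd (edgeBoundary G (W : Set V)).ncard := by
  classical
  have hdeg : ∀ v : V, G.degree v = 3 := by
    intro v
    rw [← card_neighborSet_eq_degree, ← Nat.card_eq_fintype_card,
      Nat.card_coe_set_eq]
    exact hcubic v
  set D : Finset G.Dart := Finset.univ.filter (fun d => d.fst ∈ W) with hDdef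
  set D1 : Finset G.Dart := D.filter (fun d => d.snd ∈ W) with hD1def
  set D2 : Finset G.Dart := D.filter (fun d => ¬ d.snd ∈ W) with hD2def
  -- |D| = 3 |W|
  have hD : D.card = 3 * W.card := by
    rw [Finset.card_eq_sum_card_fiberwise (f := fun d : G.Dart => d.fst) (s := D) (t := W)
      (fun d hd => (Finset.mem_filter.mp (Finset.mem_coe.mp hd)).2)]
    have : ∀ v ∈ W, (D.filter fun d => d.fst = v).card = 3 := by
      intro v hv
      have heq : D.filter (fun d => d.fst = v) =
          Finset.univ.filter (fun d : G.Dart => d.fst = v) := by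
        ext d
        simp only [hDdef, Finset.mem_filter, Finset.mem_univ, true_and]
        constructor
        · rintro ⟨_, h⟩; exact h
        · rintro rfl; exact ⟨hv, rfl⟩
      rw [heq]
      rw [show (Finset.univ.filter (fun d : G.Dart => d.fst = v)) =
        ({d : G.Dart | d.fst = v} : Finset _) from rfl]
      rw [G.dart_fst_fiber_card_eq_degree v]
      exact hdeg v
    rw [Finset.sum_congr rfl this, Finset.sum_const, smul_eq_mul, mul_comm]
  -- |D| = |D1| + |D2|
  have hsplit : D.card = D1.card + D2.card :=
    (Finset.card_filter_add_card_filter_not (s := D)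
      (p := fun d => d.snd ∈ W)).symm
  -- |D1| is even
  have hD1 : Even D1.card := by
    have hmaps : ∀ d ∈ D1, d.edge ∈ D1.image Dart.edge :=
      fun d hd => Finset.mem_image_of_mem _ hd
    rw [Finset.card_eq_sum_card_fiberwise hmaps]
    have hfib : ∀ e ∈ D1.image Dart.edge,
        (D1.filter fun d => d.edge = e).card = 2 := by
      intro e he
      obtain ⟨d, hd, rfl⟩ := Finset.mem_image.mp he
      have hdmem := Finset.mem_filter.mp hd
      have hdmem' := Finset.mem_filter.mp hdmem.1
      have hsymm : d.symm ∈ D1 := by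
        simp only [hD1def, hDdef, Finset.mem_filter, Finset.mem_univ, true_and]
        exact ⟨hdmem.2, hdmem'.2⟩
      have : D1.filter (fun d' => d'.edge = d.edge) = {d, d.symm} := by
        ext d'
        simp only [Finset.mem_filter, Finset.mem_insert, Finset.mem_singleton]
        constructor
        · rintro ⟨_, he'⟩
          exact (dart_edge_eq_iff d' d).mp he'
        · rintro (rfl | rfl)
          · exact ⟨hd, rfl⟩
          · exact ⟨hsymm, d.edge_symm⟩
      rw [this, Finset.card_insert_of_notMem (by simp [d.symm_ne.symm]),
        Finset.card_singleton]
    rw [Finset.sum_congr rfl hfib, Finset.sum_const, smul_eq_mul]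
    exact ⟨_, by ring⟩
  -- |D2| = boundary size
  have hfin : (edgeBoundary G (W : Set V)).Finite := Set.toFinite _
  have hD2 : D2.card = (edgeBoundary G (W : Set V)).ncard := by
    rw [Set.ncard_eq_toFinset_card _ hfin]
    apply Finset.card_bij (fun d _ => d.edge)
    · intro d hd
      have hdmem := Finset.mem_filter.mp hd
      have hdmem' := Finset.mem_filter.mp hdmem.1
      rw [Set.Finite.mem_toFinset]
      exact ⟨d.edge_mem, d.fst, d.snd, rfl, hdmem'.2, hdmem.2⟩
    · intro d hd d' hd' hedge
      rcases (dart_edge_eq_iff d d').mp hedge with h | h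
      · exact h
      · exfalso
        have hdmem := Finset.mem_filter.mp hd
        have hdmem' := Finset.mem_filter.mp (Finset.mem_filter.mp hd').1
        have : d.fst = d'.snd := by rw [h]; rfl
        exact (Finset.mem_filter.mp hd').2 (this ▸ (Finset.mem_filter.mp hdmem.1).2)
    · intro e he
      rw [Set.Finite.mem_toFinset] at he
      obtain ⟨hes, u, v, rfl, hu, hv⟩ := he
      have hadj : G.Adj u v := (G.mem_edgeSet).mp hes
      refine ⟨⟨(u, v), hadj⟩, ?_, rfl⟩
      simp only [hD2def, hDdef, Finset.mem_filter, Finset.mem_univ, true_and]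
      exact ⟨hu, hv⟩
  -- conclude
  obtain ⟨k, hk⟩ := hD1
  obtain ⟨m, hm⟩ := hW
  rw [← hD2, Nat.odd_iff]
  omega

end Helpers

/-- If `N` is a perfect matching of a bridgeless cubic graph meeting every
3-edge-cut in exactly one edge, then the weighting `1/5` on `N` and `2/5` elsewhere
is a fractional perfect matching. -/
theorem stmt_13 {V : Type*} [Fintype V] (G : SimpleGraph V)
    (hcubic : IsCubic G) (hbridgeless : Bridgeless G)
    (N : G.Subgraph) (hN : N.IsPerfectMatching)
    (h3cut : ∀ W : Finset V, (edgeBoundary G (W : Set V)).ncard = 3 →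
      (edgeBoundary G (W : Set V) ∩ N.edgeSet).ncard = 1)
    (w : Sym2 V → ℝ)
    (hwN : ∀ e ∈ N.edgeSet, w e = 1 / 5)
    (hwNot : ∀ e ∉ N.edgeSet, w e = 2 / 5) :
    IsFractionalPerfectMatching G w := by
  classical
  have hw15 : ∀ e : Sym2 V, w e = 1 / 5 ∨ w e = 2 / 5 := by
    intro e
    by_cases he : e ∈ N.edgeSet
    · exact Or.inl (hwN e he)
    · exact Or.inr (hwNot e he)
  refine ⟨?_, ?_, ?_⟩
  · -- weights in [0,1]
    intro e _
    rcases hw15 e with h | h <;> rw [h] <;> constructor <;> norm_num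
  · -- vertex sums
    intro v
    have hfin : (G.incidenceSet v).Finite := Set.toFinite _
    rw [finsum_mem_eq_finite_toFinset_sum _ hfin]
    set S := hfin.toFinset with hSdef
    -- S has 3 elements
    have hS3 : S.card = 3 := by
      rw [hSdef, ← Set.ncard_eq_toFinset_card _ hfin, ← Nat.card_coe_set_eq,
        Nat.card_congr (G.incidenceSetEquivNeighborSet v), Nat.card_coe_set_eq]
      exact hcubic v
    -- exactly one matching edge at v
    obtain ⟨u, hu, huniq⟩ := hN.1 (hN.2 v)
    have hfilter : S.filter (fun e => e ∈ N.edgeSet) = {s(v, u)} := by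
      ext e
      simp only [Finset.mem_filter, Finset.mem_singleton, hSdef,
        Set.Finite.mem_toFinset]
      constructor
      · rintro ⟨⟨hesG, hve⟩, heN⟩
        induction e with
        | h x y =>
          rcases Sym2.mem_iff.mp hve with h | h
          · subst h
            have hAdj : N.Adj v y := (Subgraph.mem_edgeSet).mp heN
            rw [huniq y hAdj]
          · subst h
            have hAdj : N.Adj v x := ((Subgraph.mem_edgeSet).mp heN).symm
            rw [huniq x hAdj, Sym2.eq_swap]
      · rintro rfl
        refine ⟨⟨(G.mem_edgeSet).mpr (N.adj_sub hu), Sym2.mem_mk_left v u⟩, ?_⟩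
        exact (Subgraph.mem_edgeSet).mpr hu
    exact sum135 S (fun e => e ∈ N.edgeSet) w hS3 (by rw [hfilter]; rfl)
      (fun e _ he => hwN e he) (fun e _ he => hwNot e he)
  · -- odd cuts
    intro W hWodd
    have hfin : (edgeBoundary G (W : Set V)).Finite := Set.toFinite _
    have hodd : Odd (edgeBoundary G (W : Set V)).ncard := cut_parity G hcubic W hWodd
    -- the boundary cannot be a single edge (bridgelessness)
    have hne1 : (edgeBoundary G (W : Set V)).ncard ≠ 1 := by
      intro h1
      obtain ⟨e, he⟩ := Set.ncard_eq_one.mp h1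
      have hemem : e ∈ edgeBoundary G (W : Set V) := he ▸ rfl
      obtain ⟨hes, u, v, rfl, hu, hv⟩ := hemem
      apply hbridgeless s(u, v)
      rw [isBridge_iff_adj_and_forall_walk_mem_edges]
      refine fun p => ?_
      obtain ⟨e', he', hbd⟩ := walk_cross p hu hv
      have : e' = s(u, v) := by
        have := he ▸ hbd
        simpa using this
      exact this ▸ he'
    rw [finsum_mem_eq_finite_toFinset_sum _ hfin]
    set S := hfin.toFinset with hSdef
    have hScard : S.card = (edgeBoundary G (W : Set V)).ncard :=
      (Set.ncard_eq_toFinset_card _ hfin).symm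
    obtain ⟨m, hm⟩ := hodd
    rcases Nat.lt_or_ge (edgeBoundary G (W : Set V)).ncard 5 with hlt | hge
    · -- boundary has exactly 3 edges
      have h3 : (edgeBoundary G (W : Set V)).ncard = 3 := by omega
      have h1 := h3cut W h3
      have hfin' : (edgeBoundary G (W : Set V) ∩ N.edgeSet).Finite := Set.toFinite _
      have hfiltercard : (S.filter (fun e => e ∈ N.edgeSet)).card = 1 := by
        rw [Set.ncard_eq_toFinset_card _ hfin'] at h1
        rw [← h1]
        congr 1
        ext e
        simp only [Finset.mem_filter, Set.Finite.mem_toFinset, Set.mem_inter_iff, hSdef]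
      rw [sum135 S (fun e => e ∈ N.edgeSet) w (by omega) hfiltercard
        (fun e _ he => hwN e he) (fun e _ he => hwNot e he)]
    · -- boundary has at least 5 edges: each weight is at least 1/5
      have hlb : ∀ e ∈ S, (1 / 5 : ℝ) ≤ w e := by
        intro e _
        rcases hw15 e with h | h <;> rw [h] <;> norm_num
      calc (1 : ℝ) ≤ (S.card : ℝ) * (1 / 5) := by
            rw [hScard]
            have : (5 : ℝ) ≤ ((edgeBoundary G (W : Set V)).ncard : ℝ) := by
              exact_mod_cast hge
            linarith
        _ ≤ ∑ e ∈ S, w e := by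
            have := Finset.card_nsmul_le_sum S w (1 / 5 : ℝ) hlb
            rwa [nsmul_eq_mul] at this
end
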